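/- Let $f : (0, \delta) \to (0, \infty)$ be left-continuous, of bounded variation on compact subintervals, and regularly varying at $0$ with index $-\rho$. If $\varsigma + \rho > 0$, then $\int_x^\delta y^{-\varsigma}\,df(y) \,/\, (x^{-\varsigma}f(x)) \to -\rho/(\varsigma+\rho)$ as $x \downarrow 0$. -/

import Mathlib

open MeasureTheory Filter Topology Set
open scoped ENNReal

namespace Karamata

noncomputable def hh (F : ℝ → ℝ) (u : ℝ) : ℝ := Real.log (F (Real.exp (-u)))

lemma exp_neg_tendsto : Tendsto (fun u : ℝ => Real.exp (-u)) atTop (𝓝[>] (0:ℝ)) := by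
  apply tendsto_nhdsWithin_of_tendsto_nhds_of_eventually_within
  · exact Real.tendsto_exp_atBot.comp tendsto_neg_atTop_atBot
  · exact Eventually.of_forall fun u => Real.exp_pos _

lemma hh_measurable (F : ℝ → ℝ) (hF : Measurable F) : Measurable (hh F) := by
  exact (Real.measurable_log.comp (hF.comp (Real.measurable_exp.comp measurable_neg)))

lemma hh_pointwise (F : ℝ → ℝ) (δ ρ : ℝ) (hδ : 0 < δ)
    (hpos : ∀ x ∈ Set.Ioo (0:ℝ) δ, 0 < F x)
    (hrv : ∀ l > (0:ℝ), Tendsto (fun x => F (l * x) / F x) (𝓝[>] (0:ℝ)) (𝓝 (l ^ (-ρ))))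
    (t : ℝ) : Tendsto (fun u => hh F (u + t) - hh F u) atTop (𝓝 (ρ * t)) := by
  have hl : (0:ℝ) < Real.exp (-t) := Real.exp_pos _
  have h1 : Tendsto (fun u : ℝ => F (Real.exp (-t) * Real.exp (-u)) / F (Real.exp (-u)))
      atTop (𝓝 ((Real.exp (-t)) ^ (-ρ))) := (hrv _ hl).comp exp_neg_tendsto
  have hlim : (Real.exp (-t)) ^ (-ρ) = Real.exp (ρ * t) := by
    rw [Real.rpow_def_of_pos hl, Real.log_exp]; ring_nf
  rw [hlim] at h1
  have h2 : Tendsto (fun u : ℝ =>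
      Real.log (F (Real.exp (-t) * Real.exp (-u)) / F (Real.exp (-u)))) atTop (𝓝 (ρ * t)) := by
    have := (Real.continuousAt_log (Real.exp_pos (ρ*t)).ne').tendsto.comp h1
    simpa [Real.log_exp, Function.comp_def] using this
  refine h2.congr' ?_
  filter_upwards [eventually_ge_atTop (1 - Real.log δ + |t|)] with u hu
  have hu1 : -Real.log δ < u := by
    have := abs_nonneg t; linarith
  have hu2 : -Real.log δ < u + t := by
    have := neg_abs_le t; linarith
  have hx1 : Real.exp (-u) ∈ Set.Ioo (0:ℝ) δ := by
    refine ⟨Real.exp_pos _, ?_⟩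
    rw [← Real.exp_log hδ]
    exact Real.exp_lt_exp.2 (by linarith)
  have hx2 : Real.exp (-(u+t)) ∈ Set.Ioo (0:ℝ) δ := by
    refine ⟨Real.exp_pos _, ?_⟩
    rw [← Real.exp_log hδ]
    exact Real.exp_lt_exp.2 (by linarith)
  have key : Real.exp (-t) * Real.exp (-u) = Real.exp (-(u+t)) := by
    rw [← Real.exp_add]; ring_nf
  rw [key, Real.log_div (hpos _ hx2).ne' (hpos _ hx1).ne']
  rfl

theorem uct (h : ℝ → ℝ) (ρ : ℝ) (hmeas : Measurable h)
    (hpt : ∀ t : ℝ, Tendsto (fun u => h (u + t) - h u) atTop (𝓝 (ρ * t))) :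
    ∀ ε > (0:ℝ), ∃ X : ℝ, ∀ u ≥ X, ∀ t ∈ Set.Icc (0:ℝ) 1, |h (u + t) - h u - ρ * t| ≤ ε := by
  by_contra hcon
  push_neg at hcon
  obtain ⟨ε, hε, hbad⟩ := hcon
  have hseq : ∀ n : ℕ, ∃ u : ℝ, n ≤ u ∧ ∃ t ∈ Set.Icc (0:ℝ) 1, ε < |h (u + t) - h u - ρ * t| :=
    fun n => hbad n
  choose u hu t ht hbig using hseq
  have hu_top : Tendsto u atTop atTop :=
    tendsto_atTop_mono hu tendsto_natCast_atTop_atTop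
  have hut_top : Tendsto (fun n => u n + t n) atTop atTop := by
    apply tendsto_atTop_mono (fun n => ?_) hu_top
    exact le_add_of_nonneg_right (ht n).1
  set A : ℕ → Set ℝ := fun n => Set.Icc (0:ℝ) 2 ∩ ⋂ m, ⋂ (_ : n ≤ m),
    ({s | |h (u m + s) - h (u m) - ρ * s| ≤ ε/4} ∩
     {s | |h (u m + t m + s) - h (u m + t m) - ρ * s| ≤ ε/4}) with hA
  have hmem : ∀ n s, s ∈ A n ↔ s ∈ Set.Icc (0:ℝ) 2 ∧ ∀ m, n ≤ m →
      |h (u m + s) - h (u m) - ρ * s| ≤ ε/4 ∧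
      |h (u m + t m + s) - h (u m + t m) - ρ * s| ≤ ε/4 := by
    intro n s
    simp [hA, Set.mem_iInter, forall_and]
  have hAmeas : ∀ n, MeasurableSet (A n) := by
    intro n
    refine measurableSet_Icc.inter (MeasurableSet.iInter fun m => MeasurableSet.iInter fun _ => ?_)
    refine MeasurableSet.inter ?_ ?_
    · have : Measurable (fun s => |h (u m + s) - h (u m) - ρ * s|) :=
        ((hmeas.comp (measurable_const.add measurable_id)).sub measurable_const
          |>.sub (measurable_const.mul measurable_id)).abs
      exact this measurableSet_Iic
    · have : Measurable (fun s => |h (u m + t m + s) - h (u m + t m) - ρ * s|) :=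
        ((hmeas.comp (measurable_const.add measurable_id)).sub measurable_const
          |>.sub (measurable_const.mul measurable_id)).abs
      exact this measurableSet_Iic
  have hmono : Monotone A := by
    intro a b hab s hs
    rw [hmem] at hs ⊢
    exact ⟨hs.1, fun m hm => hs.2 m (hab.trans hm)⟩
  have hunion : ⋃ n, A n = Set.Icc (0:ℝ) 2 := by
    apply Set.Subset.antisymm
    · exact Set.iUnion_subset fun n s hs => ((hmem n s).1 hs).1
    · intro s hs
      have l1 : Tendsto (fun m => |h (u m + s) - h (u m) - ρ * s|) atTop (𝓝 0) := by
        have := ((hpt s).comp hu_top).sub_const (ρ * s)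
        simpa using this.abs
      have l2 : Tendsto (fun m => |h (u m + t m + s) - h (u m + t m) - ρ * s|) atTop (𝓝 0) := by
        have := ((hpt s).comp hut_top).sub_const (ρ * s)
        simpa using this.abs
      have e1 := l1.eventually_le_const (show (0:ℝ) < ε/4 by linarith)
      have e2 := l2.eventually_le_const (show (0:ℝ) < ε/4 by linarith)
      obtain ⟨N, hN⟩ := (e1.and e2).exists_forall_of_atTop
      exact Set.mem_iUnion.2 ⟨N, (hmem N s).2 ⟨hs, fun m hm => hN m hm⟩⟩
  -- measure of A n tends to 2
  have hμ : Tendsto (fun n => volume (A n)) atTop (𝓝 (volume (⋃ n, A n))) :=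
    tendsto_measure_iUnion_atTop hmono
  rw [hunion] at hμ
  have hvol2 : volume (Set.Icc (0:ℝ) 2) = 2 := by
    rw [Real.volume_Icc]; norm_num
  rw [hvol2] at hμ
  have hev : ∀ᶠ n in atTop, (7/4 : ℝ≥0∞) < volume (A n) :=
    hμ.eventually_const_lt (by rw [ENNReal.div_lt_iff (by norm_num) (by norm_num)]; norm_num)
  obtain ⟨n, hn⟩ := hev.exists
  -- translate set
  set B := A n
  set C := (fun s : ℝ => s - t n) ⁻¹' B with hC
  have hCmeas : MeasurableSet C := (hAmeas n).preimage (measurable_id.sub measurable_const)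
  have hCvol : volume C = volume B := by
    rw [hC]
    have : (fun s : ℝ => s - t n) ⁻¹' B = (fun s : ℝ => -t n + s) ⁻¹' B := by
      ext s; simp [sub_eq_neg_add]
    rw [this, measure_preimage_add]
  have hBC_sub : B ∪ C ⊆ Set.Icc (0:ℝ) 3 := by
    intro s hs
    have h1 := (ht n).1; have h2 := (ht n).2
    rcases hs with hs | hs
    · have := ((hmem n s).1 hs).1
      exact ⟨this.1, by linarith [this.2]⟩
    · have := ((hmem n _).1 hs).1
      simp only [Set.mem_Icc] at this ⊢
      constructor <;> [linarith [this.1]; linarith [this.2]]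
  have hUnionvol : volume (B ∪ C) ≤ 3 := by
    calc volume (B ∪ C) ≤ volume (Set.Icc (0:ℝ) 3) := measure_mono hBC_sub
    _ = 3 := by rw [Real.volume_Icc]; norm_num
  have hinter : volume (B ∩ C) ≠ 0 := by
    intro h0
    have hsum : volume B + volume C = volume (B ∪ C) := by
      have := measure_union_add_inter (μ := volume) B hCmeas
      rw [h0, add_zero] at this
      exact this.symm
    have h1 : (7/2 : ℝ≥0∞) < volume (B ∪ C) := by
      rw [← hsum]
      calc (7/2:ℝ≥0∞) = 7/4 + 7/4 := by
            rw [← ENNReal.add_div]; norm_num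
            rw [ENNReal.div_eq_div_iff] <;> norm_num
      _ < volume B + volume C := ENNReal.add_lt_add hn (hCvol ▸ hn)
    have h2 := h1.trans_le hUnionvol
    rw [ENNReal.div_lt_iff (by norm_num) (by norm_num)] at h2
    norm_num at h2
  obtain ⟨s, hsB, hsC⟩ := nonempty_of_measure_ne_zero hinter
  -- contradiction
  have k1 := (((hmem n s).1 hsB).2 n le_rfl).1
  have k2 := (((hmem n _).1 hsC).2 n le_rfl).2
  have harg : u n + t n + (s - t n) = u n + s := by ring
  rw [harg] at k2
  have := hbig n
  have : |h (u n + t n) - h (u n) - ρ * t n| ≤ ε/2 := by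
    have expand : h (u n + t n) - h (u n) - ρ * t n =
        (h (u n + s) - h (u n) - ρ * s) - (h (u n + s) - h (u n + t n) - ρ * (s - t n)) := by
      ring
    rw [expand]
    calc |_ - _| ≤ |h (u n + s) - h (u n) - ρ * s| + |h (u n + s) - h (u n + t n) - ρ * (s - t n)| := abs_sub _ _
    _ ≤ ε/4 + ε/4 := add_le_add k1 k2
    _ = ε/2 := by ring
  linarith [hbig n, this]

-- log-scale Potter bound from UCT
theorem potter_log (h : ℝ → ℝ) (ρ : ℝ)
    (huct : ∀ ε > (0:ℝ), ∃ X : ℝ, ∀ u ≥ X, ∀ t ∈ Set.Icc (0:ℝ) 1, |h (u + t) - h u - ρ * t| ≤ ε) :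
    ∀ ε > (0:ℝ), ∃ X : ℝ, ∀ u v, X ≤ u → u ≤ v → |h v - h u - ρ * (v - u)| ≤ ε * (v - u) + ε := by
  intro ε hε
  obtain ⟨X, hX⟩ := huct ε hε
  refine ⟨X, fun u v huX huv => ?_⟩
  -- claim by induction on n
  have claim : ∀ n : ℕ, ∀ w, X ≤ w → ∀ t : ℝ, 0 ≤ t → t ≤ n + 1 →
      |h (w + t) - h w - ρ * t| ≤ (n + 1) * ε := by
    intro n
    induction n with
    | zero => intro w hw t ht0 ht1; simpa using hX w hw t ⟨ht0, by simpa using ht1⟩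
    | succ n ih =>
      intro w hw t ht0 ht1
      rcases le_or_gt t (n + 1) with hle | hgt
      · calc |h (w + t) - h w - ρ * t| ≤ (n + 1) * ε := ih w hw t ht0 hle
          _ ≤ (↑(n + 1) + 1) * ε := by push_cast; nlinarith
      · have h1 : |h ((w + 1) + (t - 1)) - h (w + 1) - ρ * (t - 1)| ≤ (n + 1) * ε := by
          apply ih (w + 1) (by linarith) (t - 1) (by linarith) (by push_cast; push_cast at ht1; linarith)
        have h2 : |h (w + 1) - h w - ρ * 1| ≤ ε := hX w hw 1 ⟨zero_le_one, le_rfl⟩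
        have harg : (w + 1) + (t - 1) = w + t := by ring
        rw [harg] at h1
        have expand : h (w + t) - h w - ρ * t =
            (h (w + t) - h (w + 1) - ρ * (t - 1)) + (h (w + 1) - h w - ρ * 1) := by ring
        rw [expand]
        calc |_| ≤ |h (w + t) - h (w + 1) - ρ * (t - 1)| + |h (w + 1) - h w - ρ * 1| := abs_add_le _ _
          _ ≤ (n + 1) * ε + ε := add_le_add h1 h2
          _ = (↑(n + 1) + 1) * ε := by push_cast; ring
  set t := v - u with htdef
  have ht0 : 0 ≤ t := by linarith
  have hfloor : t ≤ (⌊t⌋₊ : ℝ) + 1 := le_of_lt (Nat.lt_floor_add_one t)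
  have := claim ⌊t⌋₊ u huX t ht0 hfloor
  have harg : u + t = v := by rw [htdef]; ring
  rw [harg] at this
  have hfl : (⌊t⌋₊ : ℝ) ≤ t := Nat.floor_le ht0
  calc |h v - h u - ρ * t| ≤ (⌊t⌋₊ + 1) * ε := this
    _ ≤ (t + 1) * ε := by nlinarith
    _ = ε * t + ε := by ring

-- multiplicative Potter bound
theorem potter_mul (F : ℝ → ℝ) (δ ρ : ℝ) (hδ : 0 < δ)
    (hpos : ∀ x ∈ Set.Ioo (0:ℝ) δ, 0 < F x)
    (hlog : ∀ ε > (0:ℝ), ∃ X : ℝ, ∀ u v, X ≤ u → u ≤ v →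
      |Real.log (F (Real.exp (-v))) - Real.log (F (Real.exp (-u))) - ρ * (v - u)| ≤ ε * (v - u) + ε) :
    ∀ ε > (0:ℝ), ∃ x₀, 0 < x₀ ∧ x₀ < δ ∧ ∀ x t, 0 < x → x ≤ t → t ≤ x₀ →
      Real.exp (-ε) * (t/x) ^ (ρ - ε) ≤ F x / F t ∧ F x / F t ≤ Real.exp ε * (t/x) ^ (ρ + ε) := by
  intro ε hε
  obtain ⟨X, hX⟩ := hlog ε hε
  refine ⟨min (Real.exp (-X)) (δ/2), lt_min (Real.exp_pos _) (by linarith), ?_, ?_⟩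
  · exact lt_of_le_of_lt (min_le_right _ _) (by linarith)
  intro x t hx hxt htx₀
  set x₀ := min (Real.exp (-X)) (δ/2) with hx₀def
  have ht0 : 0 < t := lt_of_lt_of_le hx hxt
  have htδ : t < δ := lt_of_le_of_lt (htx₀.trans (min_le_right _ _)) (by linarith)
  have hxδ : x < δ := lt_of_le_of_lt hxt htδ
  have hFx := hpos x ⟨hx, hxδ⟩
  have hFt := hpos t ⟨ht0, htδ⟩
  set u := -Real.log t with hu
  set v := -Real.log x with hv
  have huX : X ≤ u := by
    rw [hu, le_neg]
    have : t ≤ Real.exp (-X) := htx₀.trans (min_le_left _ _)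
    calc Real.log t ≤ Real.log (Real.exp (-X)) := Real.log_le_log ht0 this
      _ = -X := Real.log_exp _
  have huv : u ≤ v := by
    rw [hu, hv, neg_le_neg_iff]
    exact Real.log_le_log hx hxt
  have hexpu : Real.exp (-u) = t := by rw [hu, neg_neg, Real.exp_log ht0]
  have hexpv : Real.exp (-v) = x := by rw [hv, neg_neg, Real.exp_log hx]
  have key := hX u v huX huv
  rw [hexpu, hexpv] at key
  have hvu : v - u = Real.log (t / x) := by
    rw [hu, hv, Real.log_div ht0.ne' hx.ne']; ring
  rw [hvu] at key
  have hlog_le := abs_le.1 key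
  have htx1 : (1:ℝ) ≤ t / x := (one_le_div hx).2 hxt
  have htxpos : (0:ℝ) < t / x := by linarith
  have hrw : ∀ c : ℝ, (t/x) ^ c = Real.exp (Real.log (t/x) * c) := fun c =>
    Real.rpow_def_of_pos htxpos c
  have hratio : F x / F t = Real.exp (Real.log (F x) - Real.log (F t)) := by
    rw [Real.exp_sub, Real.exp_log hFx, Real.exp_log hFt]
  constructor
  · rw [hratio, hrw, ← Real.exp_add]
    apply Real.exp_le_exp.2
    have hlogtx : 0 ≤ Real.log (t/x) := Real.log_nonneg htx1
    nlinarith [hlog_le.1]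
  · rw [hratio, hrw, ← Real.exp_add]
    apply Real.exp_le_exp.2
    have hlogtx : 0 ≤ Real.log (t/x) := Real.log_nonneg htx1
    nlinarith [hlog_le.2]

-- abbreviation for the potter conclusion
def PotterBound (F : ℝ → ℝ) (δ ρ : ℝ) : Prop :=
  ∀ ε > (0:ℝ), ∃ x₀, 0 < x₀ ∧ x₀ < δ ∧ ∀ x t, 0 < x → x ≤ t → t ≤ x₀ →
      Real.exp (-ε) * (t/x) ^ (ρ - ε) ≤ F x / F t ∧ F x / F t ≤ Real.exp ε * (t/x) ^ (ρ + ε)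

-- x ^ (-a) → ∞ as x → 0+ for a > 0
lemma rpow_neg_tendsto_atTop {a : ℝ} (ha : 0 < a) :
    Tendsto (fun x : ℝ => x ^ (-a)) (𝓝[>] (0:ℝ)) atTop := by
  have h1 : Tendsto (fun x : ℝ => x ^ a) (𝓝[>] (0:ℝ)) (𝓝[>] (0:ℝ)) := by
    apply tendsto_nhdsWithin_of_tendsto_nhds_of_eventually_within
    · have := (Real.continuousAt_rpow_const 0 a (Or.inr ha.le)).tendsto
      rw [Real.zero_rpow ha.ne'] at this
      exact this.mono_left nhdsWithin_le_nhds
    · filter_upwards [self_mem_nhdsWithin] with x (hx : 0 < x)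
      exact Real.rpow_pos_of_pos hx a
  have h2 : Tendsto (fun y : ℝ => y⁻¹) (𝓝[>] (0:ℝ)) atTop := tendsto_inv_nhdsGT_zero
  have := h2.comp h1
  have key : ∀ x ∈ Set.Ioi (0:ℝ), (x ^ a)⁻¹ = x ^ (-a) := by
    intro x (hx : 0 < x)
    rw [Real.rpow_neg hx.le]
  exact this.congr' (eventually_nhdsWithin_of_forall key)

-- step 5
theorem step5 (F : ℝ → ℝ) (δ ρ ς : ℝ) (hδ : 0 < δ) (hςρ : 0 < ς + ρ)
    (hpos : ∀ x ∈ Set.Ioo (0:ℝ) δ, 0 < F x)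
    (hpotter : PotterBound F δ ρ) :
    Tendsto (fun x => x ^ (-ς) * F x) (𝓝[>] (0:ℝ)) atTop := by
  set ε := (ς + ρ)/2 with hεdef
  have hε : 0 < ε := by positivity
  obtain ⟨x₀, hx₀pos, hx₀δ, hP⟩ := hpotter ε hε
  have hFx₀ : 0 < F x₀ := hpos x₀ ⟨hx₀pos, hx₀δ⟩
  set c := F x₀ * Real.exp (-ε) * x₀ ^ (ρ - ε) with hcdef
  have hc : 0 < c := by positivity
  have hbound : ∀ᶠ x in 𝓝[>] (0:ℝ), c * x ^ (-(ς+ρ)/2) ≤ x ^ (-ς) * F x := by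
    filter_upwards [Ioo_mem_nhdsGT hx₀pos] with x hx
    obtain ⟨hx0, hxx₀⟩ := hx
    have h := (hP x x₀ hx0 hxx₀.le le_rfl).1
    -- F x ≥ F x₀ * exp(-ε) * (x₀/x)^(ρ-ε)
    have hFxb : F x₀ * (Real.exp (-ε) * (x₀/x) ^ (ρ - ε)) ≤ F x := by
      have := (le_div_iff₀ hFx₀).1 h
      linarith
    have hsplit : (x₀/x) ^ (ρ - ε) = x₀ ^ (ρ - ε) * x ^ (-(ρ - ε)) := by
      rw [Real.div_rpow hx₀pos.le hx0.le, Real.rpow_neg hx0.le, div_eq_mul_inv]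
    have hxne : x ^ (-ς) > 0 := Real.rpow_pos_of_pos hx0 _
    calc c * x ^ (-(ς+ρ)/2) = x ^ (-ς) * (F x₀ * (Real.exp (-ε) * (x₀/x)^(ρ-ε))) := by
          rw [hsplit, hcdef,
            show (-(ς+ρ)/2 : ℝ) = (-ς) + (-(ρ - ε)) by rw [hεdef]; ring,
            Real.rpow_add hx0]
          ring
      _ ≤ x ^ (-ς) * F x := by
          apply mul_le_mul_of_nonneg_left hFxb hxne.le
  have hdiv : Tendsto (fun x : ℝ => c * x ^ (-(ς+ρ)/2)) (𝓝[>] (0:ℝ)) atTop := by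
    have : Tendsto (fun x : ℝ => x ^ (-((ς+ρ)/2))) (𝓝[>] (0:ℝ)) atTop :=
      rpow_neg_tendsto_atTop (by positivity)
    have h2 := this.const_mul_atTop hc
    refine h2.congr fun x => ?_
    rw [show (-((ς+ρ)/2) : ℝ) = -(ς+ρ)/2 by ring]
  exact tendsto_atTop_mono' _ hbound hdiv

lemma measurable_rpow_const' (c : ℝ) : Measurable fun s : ℝ => s ^ c := by
  have h : (fun s : ℝ => s ^ c) = fun s =>
      if s < 0 then Real.exp (Real.log s * c) * Real.cos (c * Real.pi)
      else if s = 0 then (if c = 0 then 1 else 0)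
      else Real.exp (Real.log s * c) := by
    funext s
    rcases lt_trichotomy s 0 with hs | rfl | hs
    · rw [if_pos hs, Real.rpow_def_of_neg hs]
    · simp only [lt_irrefl, if_false, if_pos rfl]
      rcases eq_or_ne c 0 with rfl | hc
      · simp
      · simp [Real.zero_rpow hc, hc]
    · rw [if_neg (not_lt.2 hs.le), if_neg hs.ne', Real.rpow_def_of_pos hs]
  rw [h]
  apply Measurable.ite measurableSet_Iio
  · exact ((Real.measurable_log.mul measurable_const).exp.mul measurable_const)
  apply Measurable.ite (measurableSet_eq_fun measurable_id measurable_const)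
  · exact measurable_const
  · exact (Real.measurable_log.mul measurable_const).exp


theorem step6 (F : ℝ → ℝ) (δ ρ ς : ℝ) (hF : Measurable F) (hδ : 0 < δ) (hςρ : 0 < ς + ρ)
    (hpos : ∀ x ∈ Set.Ioo (0:ℝ) δ, 0 < F x)
    (hrv : ∀ l > (0:ℝ), Tendsto (fun x => F (l * x) / F x) (𝓝[>] (0:ℝ)) (𝓝 (l ^ (-ρ))))
    (hpotter : PotterBound F δ ρ)
    (hdiv : Tendsto (fun x => x ^ (-ς) * F x) (𝓝[>] (0:ℝ)) atTop)
    (hint : ∀ x, 0 < x → IntegrableOn (fun t => t ^ (-ς-1) * F t) (Set.Ioc x δ)) :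
    Tendsto (fun x => (∫ t in Set.Ioc x δ, t ^ (-ς-1) * F t) / (x ^ (-ς) * F x)) (𝓝[>] (0:ℝ))
      (𝓝 (1/(ς+ρ))) := by
  set ε := (ς + ρ)/2 with hεdef
  have hε : 0 < ε := by positivity
  obtain ⟨x₀, hx₀pos, hx₀δ, hP⟩ := hpotter ε hε
  set Φ : ℝ → ℝ → ℝ := fun x s =>
    Set.indicator (Set.Ioc 1 (x₀/x)) (fun s => s ^ (-ς-1) * F (x*s)) s with hΦdef
  set ψ : ℝ → ℝ → ℝ := fun x s => Φ x s / F x with hψdef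
  set lim : ℝ → ℝ := fun s => s ^ (-ς-1) * s ^ (-ρ) with hlimdef
  set bound : ℝ → ℝ := fun s => Real.exp ε * s ^ (-ς-1-ρ+ε) with hbounddef
  -- DCT
  have hdct : Tendsto (fun x => ∫ s in Set.Ioi (1:ℝ), ψ x s) (𝓝[>] (0:ℝ))
      (𝓝 (∫ s in Set.Ioi (1:ℝ), lim s)) := by
    apply tendsto_integral_filter_of_dominated_convergence bound
    · apply Eventually.of_forall
      intro x
      apply Measurable.aestronglyMeasurable
      apply Measurable.div_const
      exact Measurable.indicator
        ((measurable_rpow_const' _).mul (hF.comp (measurable_const_mul x))) measurableSet_Ioc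
    · filter_upwards [Ioo_mem_nhdsGT hx₀pos] with x hx
      rw [ae_restrict_iff' measurableSet_Ioi]
      apply Eventually.of_forall
      intro s hs
      have hs1 : (1:ℝ) < s := hs
      have hs0 : (0:ℝ) < s := by linarith
      have hx0 : (0:ℝ) < x := hx.1
      have hboundpos : 0 ≤ bound s := by
        rw [hbounddef]; positivity
      by_cases hmem : s ∈ Set.Ioc 1 (x₀/x)
      · have hxs : x * s ≤ x₀ := by
          have := hmem.2
          rw [le_div_iff₀ hx0] at this
          linarith [this]
        have hxxs : x ≤ x * s := le_mul_of_one_le_right hx0.le hs1.le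
        have hpot := (hP x (x*s) hx0 hxxs hxs).1
        have hdivs : (x*s)/x = s := by field_simp
        rw [hdivs] at hpot
        have hFxs : 0 < F (x*s) := hpos _ ⟨by positivity, by
          calc x*s ≤ x₀ := hxs
          _ < δ := hx₀δ⟩
        have hFx : 0 < F x := hpos _ ⟨hx0, by
          calc x < x₀ := hx.2
          _ < δ := hx₀δ⟩
        have hsp : 0 < Real.exp (-ε) * s ^ (ρ - ε) := by positivity
        have hratio : F (x*s) / F x ≤ Real.exp ε * s ^ (ε - ρ) := by
          rw [div_le_iff₀ hFx]
          rw [le_div_iff₀ hFxs] at hpot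
          have key : Real.exp ε * s ^ (ε - ρ) * (Real.exp (-ε) * s ^ (ρ - ε)) = 1 := by
            rw [show Real.exp ε * s ^ (ε-ρ) * (Real.exp (-ε) * s ^ (ρ-ε))
                = (Real.exp ε * Real.exp (-ε)) * (s^(ε-ρ) * s^(ρ-ε)) by ring,
              ← Real.exp_add, ← Real.rpow_add hs0]
            norm_num
          have hq : 0 < Real.exp ε * s ^ (ε - ρ) := by positivity
          have hpot2 : Real.exp (-ε) * s ^ (ρ - ε) * F (x*s) ≤ F x := by
            nlinarith [hpot]
          calc F (x*s) = (Real.exp ε * s^(ε-ρ) * (Real.exp (-ε) * s^(ρ-ε))) * F (x*s) := by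
                rw [key, one_mul]
            _ = Real.exp ε * s^(ε-ρ) * (Real.exp (-ε) * s^(ρ-ε) * F (x*s)) := by ring
            _ ≤ Real.exp ε * s^(ε-ρ) * F x := mul_le_mul_of_nonneg_left hpot2 hq.le
        have hΦval : ψ x s = s ^ (-ς-1) * (F (x*s) / F x) := by
          rw [hψdef, hΦdef]
          simp only [Set.indicator_of_mem hmem]
          ring
        rw [hΦval]
        have hnorm : ‖s ^ (-ς-1) * (F (x*s) / F x)‖ = s ^ (-ς-1) * (F (x*s) / F x) := by
          rw [Real.norm_eq_abs, abs_of_nonneg]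
          positivity
        rw [hnorm, hbounddef]
        calc s ^ (-ς-1) * (F (x*s) / F x) ≤ s ^ (-ς-1) * (Real.exp ε * s ^ (ε - ρ)) := by
              apply mul_le_mul_of_nonneg_left hratio (Real.rpow_nonneg hs0.le _)
        _ = Real.exp ε * s ^ (-ς-1-ρ+ε) := by
              rw [show s ^ (-ς-1) * (Real.exp ε * s ^ (ε-ρ))
                  = Real.exp ε * (s ^ (-ς-1) * s ^ (ε-ρ)) by ring,
                ← Real.rpow_add hs0, show (-ς-1) + (ε-ρ) = -ς-1-ρ+ε by ring]
      · have : ψ x s = 0 := by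
          rw [hψdef, hΦdef]
          simp [Set.indicator_of_notMem hmem]
        rw [this]
        simpa using hboundpos
    · -- integrable bound
      rw [hbounddef]
      apply Integrable.const_mul
      apply integrableOn_Ioi_rpow_of_lt _ one_pos
      rw [hεdef]; linarith
    · -- pointwise convergence
      rw [ae_restrict_iff' measurableSet_Ioi]
      apply Eventually.of_forall
      intro s hs
      have hs1 : (1:ℝ) < s := hs
      have hs0 : (0:ℝ) < s := by linarith
      have hev : ∀ᶠ x in 𝓝[>] (0:ℝ), ψ x s = s ^ (-ς-1) * (F (s * x) / F x) := by
        filter_upwards [Ioo_mem_nhdsGT (show (0:ℝ) < x₀/s by positivity)] with x hx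
        have hx0 : (0:ℝ) < x := hx.1
        have hmem : s ∈ Set.Ioc 1 (x₀/x) := by
          refine ⟨hs1, ?_⟩
          rw [le_div_iff₀ hx0]
          have := hx.2
          rw [lt_div_iff₀ hs0] at this
          linarith
        rw [hψdef, hΦdef]
        simp only [Set.indicator_of_mem hmem]
        rw [mul_comm x s]
        ring
      exact ((hrv s hs0).const_mul (s ^ (-ς-1))).congr' (hev.mono fun x hx => hx.symm)
  have hlimint : (∫ s in Set.Ioi (1:ℝ), lim s) = 1/(ς+ρ) := by
    rw [hlimdef]
    have hcongr : ∀ s ∈ Set.Ioi (1:ℝ), s ^ (-ς-1) * s ^ (-ρ) = s ^ (-ς-1-ρ) := by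
      intro s hs
      rw [← Real.rpow_add (lt_trans one_pos hs), show -ς-1 + -ρ = -ς-1-ρ by ring]
    rw [setIntegral_congr_fun measurableSet_Ioi hcongr,
      integral_Ioi_rpow_of_lt (by linarith) one_pos, Real.one_rpow,
      show -ς-1-ρ+1 = -(ς+ρ) by ring, div_neg, neg_div, neg_neg]
  set C : ℝ := ∫ t in Set.Ioc x₀ δ, t ^ (-ς-1) * F t with hCdef
  have hchg : ∀ x ∈ Set.Ioo (0:ℝ) x₀, (∫ t in Set.Ioc x δ, t ^ (-ς-1) * F t)
      = x ^ (-ς) * (∫ s in Set.Ioi (1:ℝ), Φ x s) + C := by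
    intro x hx
    have hx0 : (0:ℝ) < x := hx.1
    set H : ℝ → ℝ := Set.indicator (Set.Ioc x x₀) (fun t => t ^ (-ς-1) * F t) with hHdef
    have hsplit : (∫ t in Set.Ioc x δ, t ^ (-ς-1) * F t)
        = (∫ t in Set.Ioc x x₀, t ^ (-ς-1) * F t) + C := by
      rw [hCdef, ← setIntegral_union (Set.Ioc_disjoint_Ioc_of_le le_rfl) measurableSet_Ioc
        ((hint x hx0).mono_set (Set.Ioc_subset_Ioc le_rfl hx₀δ.le))
        (hint x₀ hx₀pos),
        Set.Ioc_union_Ioc_eq_Ioc hx.2.le hx₀δ.le]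
    have h1 : (∫ t in Set.Ioc x x₀, t ^ (-ς-1) * F t) = ∫ t in Set.Ioi x, H t := by
      rw [hHdef, setIntegral_indicator measurableSet_Ioc,
        Set.inter_eq_self_of_subset_right Set.Ioc_subset_Ioi_self]
    have h2 : ∫ s in Set.Ioi (1:ℝ), H (x * s) = x⁻¹ • ∫ t in Set.Ioi (x*1), H t :=
      integral_comp_mul_left_Ioi H 1 hx0
    rw [mul_one] at h2
    have h3 : ∫ t in Set.Ioi x, H t = x * ∫ s in Set.Ioi (1:ℝ), H (x * s) := by
      rw [h2, smul_eq_mul, ← mul_assoc, mul_inv_cancel₀ hx0.ne', one_mul]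
    have hH : ∀ s ∈ Set.Ioi (1:ℝ), H (x*s) = x^(-ς-1) * Φ x s := by
      intro s hs
      have hs1 : (1:ℝ) < s := hs
      have hs0 : (0:ℝ) < s := lt_trans one_pos hs1
      by_cases hc : x * s ≤ x₀
      · have hmem : x*s ∈ Set.Ioc x x₀ := ⟨(lt_mul_iff_one_lt_right hx0).2 hs1, hc⟩
        have hmem2 : s ∈ Set.Ioc 1 (x₀/x) := ⟨hs1, (le_div_iff₀ hx0).2 (by linarith)⟩
        rw [hHdef, hΦdef]
        simp only [Set.indicator_of_mem hmem, Set.indicator_of_mem hmem2]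
        rw [Real.mul_rpow hx0.le hs0.le]
        ring
      · have hmem : x*s ∉ Set.Ioc x x₀ := fun hm => hc hm.2
        have hmem2 : s ∉ Set.Ioc 1 (x₀/x) := by
          intro hm
          exact hc (by
            have := (le_div_iff₀ hx0).1 hm.2
            linarith)
        rw [hHdef, hΦdef]
        simp only [Set.indicator_of_notMem hmem, Set.indicator_of_notMem hmem2, mul_zero]
    have h4 : ∫ s in Set.Ioi (1:ℝ), H (x*s) = x^(-ς-1) * ∫ s in Set.Ioi (1:ℝ), Φ x s := by
      rw [setIntegral_congr_fun measurableSet_Ioi hH, integral_const_mul]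
    have hxx : x * x ^ (-ς-1) = x ^ (-ς) := by
      nth_rewrite 1 [← Real.rpow_one x]
      rw [← Real.rpow_add hx0]
      norm_num
    rw [hsplit, h1, h3, h4, ← mul_assoc, hxx]
  -- assembly
  have hzero : Tendsto (fun x => C * (x ^ (-ς) * F x)⁻¹) (𝓝[>] (0:ℝ)) (𝓝 0) := by
    have h1 := hdiv.inv_tendsto_atTop
    have h2 := h1.const_mul C
    simpa using h2
  have hfinal := hdct.add hzero
  rw [hlimint, add_zero] at hfinal
  apply hfinal.congr'
  filter_upwards [Ioo_mem_nhdsGT hx₀pos] with x hx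
  have hx0 : (0:ℝ) < x := hx.1
  have hFx : 0 < F x := hpos x ⟨hx0, hx.2.trans hx₀δ⟩
  have hxne : x ^ (-ς) ≠ 0 := (Real.rpow_pos_of_pos hx0 _).ne'
  have hψint : ∫ s in Set.Ioi (1:ℝ), ψ x s = (∫ s in Set.Ioi (1:ℝ), Φ x s) / F x := by
    rw [hψdef]
    exact integral_div _ _
  rw [hψint, hchg x hx]
  field_simp

lemma key_rpow (ς : ℝ) {y δ' : ℝ} (hy : 0 < y) (hyδ : y ≤ δ') :
    (∫ t in Set.Ioc y δ', ς * t ^ (-ς-1)) = y ^ (-ς) - δ' ^ (-ς) := by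
  by_cases hς : ς = 0
  · subst hς; simp
  · rw [← intervalIntegral.integral_of_le hyδ, intervalIntegral.integral_const_mul,
      integral_rpow (Or.inr ⟨by intro h; apply hς; linarith [h], fun h => by
        have h1 := h.1
        rw [Set.uIcc_of_le hyδ] at h
        exact absurd h.1 (not_le.2 hy)⟩),
      show -ς-1+1 = -ς by ring]
    field_simp
    ring

-- rpow bounded on [x, δ]
lemma rpow_bound {x δ c : ℝ} (hx : 0 < x) {t : ℝ} (ht1 : x ≤ t) (ht2 : t ≤ δ) :
    t ^ c ≤ max (x ^ c) (δ ^ c) := by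
  rcases le_or_gt 0 c with hc | hc
  · exact le_max_of_le_right (Real.rpow_le_rpow (by linarith) ht2 hc)
  · exact le_max_of_le_left (Real.rpow_le_rpow_of_nonpos hx ht1 hc.le)

theorem ibp (μ : Measure ℝ) [IsLocallyFiniteMeasure μ] (ς δ x : ℝ) (hx0 : 0 < x) (hxδ : x < δ) :
    (∫ y in Set.Ico x δ, y ^ (-ς) ∂μ)
      = δ ^ (-ς) * (μ (Set.Ico x δ)).toReal
        + ∫ t in Set.Ioc x δ, ς * t ^ (-ς-1) * (μ (Set.Ico x t)).toReal := by
  have hμfin : μ (Set.Ico x δ) < ⊤ :=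
    lt_of_le_of_lt (measure_mono Set.Ico_subset_Icc_self) isCompact_Icc.measure_lt_top
  haveI : IsFiniteMeasure (μ.restrict (Set.Ico x δ)) :=
    ⟨by rwa [Measure.restrict_apply_univ]⟩
  haveI : IsFiniteMeasure (volume.restrict (Set.Ioc x δ)) :=
    ⟨by rw [Measure.restrict_apply_univ, Real.volume_Ioc]; exact ENNReal.ofReal_lt_top⟩
  set G : ℝ → ℝ → ℝ := fun y t =>
    Set.indicator (Set.Ioc x δ ∩ Set.Ioi y) (fun t => ς * t ^ (-ς-1)) t with hGdef
  -- inner integral identity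
  have hinner : ∀ y ∈ Set.Ico x δ, (∫ t in Set.Ioc x δ, G y t) = y ^ (-ς) - δ ^ (-ς) := by
    intro y hy
    have hxy : x ≤ y := hy.1
    have hyδ : y < δ := hy.2
    show (∫ t in Set.Ioc x δ,
      Set.indicator (Set.Ioc x δ ∩ Set.Ioi y) (fun t => ς * t ^ (-ς-1)) t) = _
    rw [setIntegral_indicator ((measurableSet_Ioc).inter measurableSet_Ioi)]
    have hset : Set.Ioc x δ ∩ (Set.Ioc x δ ∩ Set.Ioi y) = Set.Ioc y δ := by
      ext t
      simp only [Set.mem_inter_iff, Set.mem_Ioc, Set.mem_Ioi]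
      constructor
      · rintro ⟨⟨h1, h2⟩, _, h3⟩; exact ⟨h3, h2⟩
      · rintro ⟨h1, h2⟩; exact ⟨⟨lt_of_le_of_lt hxy h1, h2⟩, ⟨lt_of_le_of_lt hxy h1, h2⟩, h1⟩
    rw [hset, key_rpow ς (lt_of_lt_of_le hx0 hxy) hyδ.le]
  -- outer integrand identity
  have e1 : (∫ y in Set.Ico x δ, y ^ (-ς) ∂μ)
      = ∫ y in Set.Ico x δ, (δ ^ (-ς) + ∫ t in Set.Ioc x δ, G y t) ∂μ := by
    apply setIntegral_congr_fun measurableSet_Ico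
    intro y hy
    show y ^ (-ς) = δ ^ (-ς) + ∫ t in Set.Ioc x δ, G y t
    rw [hinner y hy]
    ring
  -- integrability of uncurried G
  set M : ℝ := |ς| * max (x ^ (-ς-1)) (δ ^ (-ς-1)) with hMdef
  have hGbound : ∀ p : ℝ × ℝ, ‖Function.uncurry G p‖ ≤ M := by
    rintro ⟨y, t⟩
    show ‖Set.indicator (Set.Ioc x δ ∩ Set.Ioi y) (fun t => ς * t ^ (-ς-1)) t‖ ≤ M
    by_cases hm : t ∈ Set.Ioc x δ ∩ Set.Ioi y
    · rw [Set.indicator_of_mem hm]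
      have ht1 : x ≤ t := hm.1.1.le
      have ht2 : t ≤ δ := hm.1.2
      rw [Real.norm_eq_abs, abs_mul, hMdef]
      apply mul_le_mul_of_nonneg_left _ (abs_nonneg ς)
      rw [abs_of_nonneg (Real.rpow_nonneg (by linarith) _)]
      exact rpow_bound hx0 ht1 ht2
    · rw [Set.indicator_of_notMem hm]
      simp only [norm_zero, hMdef]
      positivity
  have hGmeas : Measurable (Function.uncurry G) := by
    have : Function.uncurry G = Set.indicator
        {p : ℝ × ℝ | (p.2 ∈ Set.Ioc x δ) ∧ p.1 < p.2} (fun p => ς * p.2 ^ (-ς-1)) := by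
      funext p
      show Set.indicator (Set.Ioc x δ ∩ Set.Ioi p.1) (fun t => ς * t ^ (-ς-1)) p.2 = _
      simp only [Set.indicator_apply, Set.mem_inter_iff, Set.mem_Ioi, Set.mem_setOf_eq]
    rw [this]
    apply Measurable.indicator
    · exact measurable_const.mul ((measurable_rpow_const' _).comp measurable_snd)
    · apply MeasurableSet.inter
      · exact measurable_snd measurableSet_Ioc
      · exact measurableSet_lt measurable_fst measurable_snd
  have hGint : Integrable (Function.uncurry G)
      ((μ.restrict (Set.Ico x δ)).prod (volume.restrict (Set.Ioc x δ))) := by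
    apply Integrable.mono' (integrable_const M) hGmeas.aestronglyMeasurable
    exact Eventually.of_forall hGbound
  -- swap
  have hswap : (∫ y in Set.Ico x δ, ∫ t in Set.Ioc x δ, G y t ∂volume ∂μ)
      = ∫ t in Set.Ioc x δ, ∫ y in Set.Ico x δ, G y t ∂μ ∂volume :=
    integral_integral_swap hGint
  -- inner after swap
  have hafter : ∀ t ∈ Set.Ioc x δ,
      (∫ y in Set.Ico x δ, G y t ∂μ) = ς * t ^ (-ς-1) * (μ (Set.Ico x t)).toReal := by
    intro t ht
    have hGt : ∀ y : ℝ, G y t = Set.indicator (Set.Iio t) (fun _ => Set.indicator (Set.Ioc x δ)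
        (fun t => ς * t ^ (-ς-1)) t) y := by
      intro y
      show Set.indicator (Set.Ioc x δ ∩ Set.Ioi y) (fun t => ς * t ^ (-ς-1)) t = _
      simp only [Set.indicator_apply, Set.mem_inter_iff, Set.mem_Ioi, Set.mem_Iio]
      by_cases h1 : y < t
      · simp only [h1, and_true, if_true]
      · simp only [h1, and_false, if_false]
    have e2 : (∫ y in Set.Ico x δ, G y t ∂μ)
        = ((μ.restrict (Set.Ico x δ)) (Set.Iio t)).toReal •
          Set.indicator (Set.Ioc x δ) (fun t => ς * t ^ (-ς-1)) t := by
      rw [show (fun y => G y t) = Set.indicator (Set.Iio t) (fun _ => Set.indicator (Set.Ioc x δ)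
        (fun t => ς * t ^ (-ς-1)) t) from funext hGt] at *
      exact integral_indicator_const _ measurableSet_Iio
    rw [e2, Measure.restrict_apply measurableSet_Iio]
    have hset2 : Set.Iio t ∩ Set.Ico x δ = Set.Ico x t := by
      ext y
      simp only [Set.mem_inter_iff, Set.mem_Iio, Set.mem_Ico]
      constructor
      · rintro ⟨h1, h2, h3⟩; exact ⟨h2, h1⟩
      · rintro ⟨h1, h2⟩; exact ⟨h2, h1, lt_of_lt_of_le h2 ht.2⟩
    rw [hset2, Set.indicator_of_mem ht, smul_eq_mul]
    ring
  -- combine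
  have hInt2 : Integrable (fun y => ∫ t in Set.Ioc x δ, G y t ∂volume)
      (μ.restrict (Set.Ico x δ)) := hGint.integral_prod_left
  rw [e1, integral_add (integrable_const _) hInt2, integral_const, hswap,
    Measure.real, Measure.restrict_apply_univ, smul_eq_mul, mul_comm ((μ (Set.Ico x δ)).toReal)]
  congr 1
  exact setIntegral_congr_fun measurableSet_Ioc hafter

lemma integrableOn_rpow_Ioc (c : ℝ) {x δ : ℝ} (hx : 0 < x) :
    IntegrableOn (fun t : ℝ => t ^ c) (Set.Ioc x δ) volume := by
  rcases le_or_gt δ x with h | h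
  · rw [Set.Ioc_eq_empty (not_lt.2 h)]; exact integrableOn_empty
  · haveI : IsFiniteMeasure (volume.restrict (Set.Ioc x δ)) :=
      ⟨by rw [Measure.restrict_apply_univ, Real.volume_Ioc]; exact ENNReal.ofReal_lt_top⟩
    apply Integrable.mono' (integrable_const (max (x ^ c) (δ ^ c)))
      (measurable_rpow_const' c).aestronglyMeasurable
    rw [ae_restrict_iff' measurableSet_Ioc]
    apply Eventually.of_forall
    intro t ht
    rw [Real.norm_eq_abs, abs_of_nonneg (Real.rpow_nonneg (by linarith [ht.1]) c)]
    exact rpow_bound hx ht.1.le ht.2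

lemma mu_fin (μ : Measure ℝ) [IsLocallyFiniteMeasure μ] (a b : ℝ) : μ (Set.Ico a b) ≠ ⊤ :=
  (lt_of_le_of_lt (measure_mono Set.Ico_subset_Icc_self) isCompact_Icc.measure_lt_top).ne

lemma int_mu (μ : Measure ℝ) [IsLocallyFiniteMeasure μ] (ς : ℝ) {x δ : ℝ} (hx0 : 0 < x) :
    IntegrableOn (fun t => ς * t ^ (-ς-1) * (μ (Set.Ico x t)).toReal) (Set.Ioc x δ) volume := by
  haveI : IsFiniteMeasure (volume.restrict (Set.Ioc x δ)) :=
    ⟨by rw [Measure.restrict_apply_univ, Real.volume_Ioc]; exact ENNReal.ofReal_lt_top⟩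
  have hmono : Monotone (fun t => (μ (Set.Ico x t)).toReal) := fun a b hab =>
    ENNReal.toReal_mono (mu_fin μ x b) (measure_mono (Set.Ico_subset_Ico_right hab))
  have hg₀ : IntegrableOn (fun t => (μ (Set.Ico x t)).toReal) (Set.Ioc x δ) volume := by
    apply Integrable.mono' (integrable_const ((μ (Set.Ico x δ)).toReal))
      hmono.measurable.aestronglyMeasurable
    rw [ae_restrict_iff' measurableSet_Ioc]
    apply Eventually.of_forall
    intro t ht
    rw [Real.norm_eq_abs, abs_of_nonneg ENNReal.toReal_nonneg]
    exact hmono ht.2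
  apply Integrable.bdd_mul (c := |ς| * max (x ^ (-ς-1)) (δ ^ (-ς-1))) hg₀
    ((measurable_const.mul (measurable_rpow_const' _)).aestronglyMeasurable)
  rw [ae_restrict_iff' measurableSet_Ioc]
  apply Eventually.of_forall
  intro t ht
  rw [Real.norm_eq_abs, Pi.mul_apply, abs_mul]
  apply mul_le_mul_of_nonneg_left _ (abs_nonneg ς)
  rw [abs_of_nonneg (Real.rpow_nonneg (by linarith [ht.1]) _)]
  exact rpow_bound hx0 ht.1.le ht.2

end Karamata

open Karamata

/-- Stieltjes form of Karamata's theorem at the origin.  The bounded-variation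
left-continuous function `f` is encoded via two locally finite measures
`μ₁, μ₂` with `f b - f a = μ₁ [a,b) - μ₂ [a,b)`, so that
`∫_{[x,δ)} y^{-ς} df(y) = ∫_{[x,δ)} y^{-ς} dμ₁ - ∫_{[x,δ)} y^{-ς} dμ₂`. -/
theorem karamata_stieltjes (f : ℝ → ℝ) (δ ρ ς : ℝ) (hδ : 0 < δ)
    (hςρ : 0 < ς + ρ)
    (μ₁ μ₂ : Measure ℝ) [IsLocallyFiniteMeasure μ₁] [IsLocallyFiniteMeasure μ₂]
    (hpos : ∀ x ∈ Set.Ioo (0:ℝ) δ, 0 < f x)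
    (hbv : ∀ a b : ℝ, 0 < a → a ≤ b → b ≤ δ →
      f b - f a = (μ₁ (Set.Ico a b)).toReal - (μ₂ (Set.Ico a b)).toReal)
    (hrv : ∀ l > (0:ℝ), Tendsto (fun x => f (l * x) / f x) (𝓝[>] (0:ℝ)) (𝓝 (l ^ (-ρ)))) :
    Tendsto (fun x =>
        ((∫ y in Set.Ico x δ, y ^ (-ς) ∂μ₁) - ∫ y in Set.Ico x δ, y ^ (-ς) ∂μ₂)
          / (x ^ (-ς) * f x))
      (𝓝[>] (0:ℝ)) (𝓝 (-ρ / (ς + ρ))) := by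
  classical
  set g : ℝ → ℝ := fun t => f δ - (μ₁ (Set.Ico t δ)).toReal + (μ₂ (Set.Ico t δ)).toReal
    with hgdef
  have hgmeas : Measurable g := by
    have h1 : Antitone (fun t => (μ₁ (Set.Ico t δ)).toReal) := fun a b hab =>
      ENNReal.toReal_mono (mu_fin μ₁ a δ) (measure_mono (Set.Ico_subset_Ico_left hab))
    have h2 : Antitone (fun t => (μ₂ (Set.Ico t δ)).toReal) := fun a b hab =>
      ENNReal.toReal_mono (mu_fin μ₂ a δ) (measure_mono (Set.Ico_subset_Ico_left hab))
    exact (measurable_const.sub h1.measurable).add h2.measurable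
  have hfg : ∀ t, 0 < t → t ≤ δ → g t = f t := by
    intro t ht htδ
    have hb := hbv t δ ht htδ le_rfl
    rw [hgdef]
    simp only
    linarith
  have hgpos : ∀ x ∈ Set.Ioo (0:ℝ) δ, 0 < g x := fun x hx => by
    rw [hfg x hx.1 hx.2.le]; exact hpos x hx
  have hgrv : ∀ l > (0:ℝ), Tendsto (fun x => g (l * x) / g x) (𝓝[>] (0:ℝ)) (𝓝 (l ^ (-ρ))) := by
    intro l hl
    apply (hrv l hl).congr'
    filter_upwards [Ioo_mem_nhdsGT (show (0:ℝ) < min δ (δ/l) by positivity)] with x hx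
    obtain ⟨hx0, hxm⟩ := hx
    have hx1 : x < δ := lt_of_lt_of_le hxm (min_le_left _ _)
    have hx2 : l * x < δ := by
      have h := lt_of_lt_of_le hxm (min_le_right _ _)
      rw [lt_div_iff₀ hl] at h
      linarith [h]
    rw [hfg x hx0 hx1.le, hfg (l*x) (by positivity) hx2.le]
  have huct := uct (hh g) ρ (hh_measurable g hgmeas) (hh_pointwise g δ ρ hδ hgpos hgrv)
  have hplog := potter_log (hh g) ρ huct
  have hpm : PotterBound g δ ρ := potter_mul g δ ρ hδ hgpos hplog
  have hdiv := step5 g δ ρ ς hδ hςρ hgpos hpm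
  have hint : ∀ x, 0 < x → IntegrableOn (fun t => t ^ (-ς-1) * g t) (Set.Ioc x δ) volume := by
    intro x hx
    haveI : IsFiniteMeasure (volume.restrict (Set.Ioc x δ)) :=
      ⟨by rw [Measure.restrict_apply_univ, Real.volume_Ioc]; exact ENNReal.ofReal_lt_top⟩
    have hgint : IntegrableOn g (Set.Ioc x δ) volume := by
      apply Integrable.mono' (integrable_const
        (|f δ| + (μ₁ (Set.Ico x δ)).toReal + (μ₂ (Set.Ico x δ)).toReal))
        hgmeas.aestronglyMeasurable
      rw [ae_restrict_iff' measurableSet_Ioc]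
      apply Eventually.of_forall
      intro t ht
      have hA : (μ₁ (Set.Ico t δ)).toReal ≤ (μ₁ (Set.Ico x δ)).toReal :=
        ENNReal.toReal_mono (mu_fin μ₁ x δ) (measure_mono (Set.Ico_subset_Ico_left ht.1.le))
      have hB : (μ₂ (Set.Ico t δ)).toReal ≤ (μ₂ (Set.Ico x δ)).toReal :=
        ENNReal.toReal_mono (mu_fin μ₂ x δ) (measure_mono (Set.Ico_subset_Ico_left ht.1.le))
      rw [hgdef, Real.norm_eq_abs]
      simp only
      have h1 := abs_add_le (f δ - (μ₁ (Set.Ico t δ)).toReal) ((μ₂ (Set.Ico t δ)).toReal)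
      have h2 := abs_sub (f δ) ((μ₁ (Set.Ico t δ)).toReal)
      have h3 : |(μ₁ (Set.Ico t δ)).toReal| = (μ₁ (Set.Ico t δ)).toReal :=
        abs_of_nonneg ENNReal.toReal_nonneg
      have h4 : |(μ₂ (Set.Ico t δ)).toReal| = (μ₂ (Set.Ico t δ)).toReal :=
        abs_of_nonneg ENNReal.toReal_nonneg
      calc |f δ - (μ₁ (Set.Ico t δ)).toReal + (μ₂ (Set.Ico t δ)).toReal|
          ≤ |f δ - (μ₁ (Set.Ico t δ)).toReal| + |(μ₂ (Set.Ico t δ)).toReal| := h1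
        _ ≤ |f δ| + (μ₁ (Set.Ico x δ)).toReal + (μ₂ (Set.Ico x δ)).toReal := by
            rw [h4]
            have := h2
            rw [h3] at this
            linarith
    exact Integrable.bdd_mul (c := max (x ^ (-ς-1)) (δ ^ (-ς-1))) hgint
      (measurable_rpow_const' _).aestronglyMeasurable
      (by
        rw [ae_restrict_iff' measurableSet_Ioc]
        apply Eventually.of_forall
        intro t ht
        rw [Real.norm_eq_abs, abs_of_nonneg (Real.rpow_nonneg (by linarith [ht.1]) _)]
        exact rpow_bound hx ht.1.le ht.2)
  have hK := step6 g δ ρ ς hgmeas hδ hςρ hgpos hgrv hpm hdiv hint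
  -- the integration-by-parts identity
  have hiden : ∀ x ∈ Set.Ioo (0:ℝ) δ,
      ((∫ y in Set.Ico x δ, y ^ (-ς) ∂μ₁) - ∫ y in Set.Ico x δ, y ^ (-ς) ∂μ₂)
        = δ ^ (-ς) * f δ - x ^ (-ς) * f x
          + ς * ∫ t in Set.Ioc x δ, t ^ (-ς-1) * g t := by
    intro x hx
    obtain ⟨hx0, hxδ⟩ := hx
    rw [ibp μ₁ ς δ x hx0 hxδ, ibp μ₂ ς δ x hx0 hxδ]
    have hμeq : (μ₁ (Set.Ico x δ)).toReal - (μ₂ (Set.Ico x δ)).toReal = f δ - f x :=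
      (hbv x δ hx0 hxδ.le le_rfl).symm
    have hIsub : (∫ t in Set.Ioc x δ, ς * t ^ (-ς-1) * (μ₁ (Set.Ico x t)).toReal)
        - (∫ t in Set.Ioc x δ, ς * t ^ (-ς-1) * (μ₂ (Set.Ico x t)).toReal)
        = ∫ t in Set.Ioc x δ, (ς * (t ^ (-ς-1) * g t) - f x * (ς * t ^ (-ς-1))) := by
      rw [← integral_sub (int_mu μ₁ ς hx0) (int_mu μ₂ ς hx0)]
      apply setIntegral_congr_fun measurableSet_Ioc
      intro t ht
      have hb := hbv x t hx0 ht.1.le ht.2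
      have hgt : g t = f t := hfg t (lt_trans hx0 ht.1) ht.2
      show ς * t ^ (-ς-1) * (μ₁ (Set.Ico x t)).toReal
          - ς * t ^ (-ς-1) * (μ₂ (Set.Ico x t)).toReal
        = ς * (t ^ (-ς-1) * g t) - f x * (ς * t ^ (-ς-1))
      rw [hgt]
      linear_combination (-(ς * t ^ (-ς-1))) * hb
    have hsplit : (∫ t in Set.Ioc x δ, (ς * (t ^ (-ς-1) * g t) - f x * (ς * t ^ (-ς-1))))
        = ς * (∫ t in Set.Ioc x δ, t ^ (-ς-1) * g t) - f x * (x ^ (-ς) - δ ^ (-ς)) := by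
      rw [integral_sub (((hint x hx0).const_mul ς))
        (((integrableOn_rpow_Ioc (-ς-1) hx0).const_mul ς).const_mul (f x)),
        integral_const_mul, integral_const_mul, key_rpow ς hx0 hxδ.le]
    have expand : ∀ A₁ A₂ I₁ I₂ : ℝ, (δ ^ (-ς) * A₁ + I₁) - (δ ^ (-ς) * A₂ + I₂)
        = δ ^ (-ς) * (A₁ - A₂) + (I₁ - I₂) := by intros; ring
    rw [expand, hμeq, hIsub, hsplit]
    ring
  -- final limit computation
  have hterm1 : Tendsto (fun x => δ ^ (-ς) * f δ * (x ^ (-ς) * g x)⁻¹) (𝓝[>] (0:ℝ)) (𝓝 0) := by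
    simpa using hdiv.inv_tendsto_atTop.const_mul (δ ^ (-ς) * f δ)
  have hterm3 := hK.const_mul ς
  have hsum := (hterm1.sub (tendsto_const_nhds (x := (1:ℝ)))).add hterm3
  have hlimval : (0:ℝ) - 1 + ς * (1/(ς+ρ)) = -ρ/(ς+ρ) := by
    field_simp
    ring
  rw [hlimval] at hsum
  apply hsum.congr'
  filter_upwards [Ioo_mem_nhdsGT hδ] with x hx
  have hx0 : (0:ℝ) < x := hx.1
  have hgx : 0 < g x := hgpos x hx
  have hfx : f x = g x := (hfg x hx0 hx.2.le).symm
  have hxp : (0:ℝ) < x ^ (-ς) := Real.rpow_pos_of_pos hx0 _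
  rw [hiden x hx, hfx]
  field_simp
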